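/- Varadhan upper bound with ε-dependent nonnegative potential: let (μ_ε) be a family of Borel probability measures on a Polish space X satisfying the LDP upper bound with a good rate function I (lower semi-continuous with compact sublevel sets; limsup ε log μ_ε(C) ≤ −inf_C I for every closed C). Let (V_ε) be measurable functions X → [0,+∞] and define V₋(x) = liminf_{ε→0, y→x} V_ε(y). Then limsup_{ε→0} ε log ∫ exp(−V_ε/ε) dμ_ε ≤ − inf_X (I + V₋). -/

import Mathlib

open MeasureTheory Filter Topology Set
open scoped ENNReal

/-- `ε log a` for `a ∈ [0,∞]`, with values in the extended reals. -/
noncomputable def epsLog (ε : ℝ) (a : ℝ≥0∞) : EReal :=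
  (ε : EReal) * (if a = 0 then (⊥ : EReal) else if a = ⊤ then (⊤ : EReal)
    else (Real.log a.toReal : EReal))

/-- `exp(-v/ε)` for a potential value `v ∈ [0,∞]`, as an element of `[0,∞]`. -/
noncomputable def expNegDiv' (v : ℝ≥0∞) (ε : ℝ) : ℝ≥0∞ :=
  if v = ⊤ then 0 else ENNReal.ofReal (Real.exp (-(v.toReal) / ε))

/-- Lower semi-continuous envelope `V₋(x) = liminf_{ε→0⁺, y→x} V_ε(y)`. -/
noncomputable def lowerEnv {X : Type*} [TopologicalSpace X] (V : ℝ → X → ℝ≥0∞) (x : X) :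
    ℝ≥0∞ :=
  Filter.liminf (fun p : ℝ × X => V p.1 p.2) ((nhdsWithin 0 (Set.Ioi 0)) ×ˢ nhds x)

section helpers

local notation "Fz" => nhdsWithin (0:ℝ) (Set.Ioi 0)

lemma epsLog_zero {ε : ℝ} (hε : 0 < ε) : epsLog ε 0 = ⊥ := by
  simp [epsLog, EReal.coe_mul_bot_of_pos hε]

lemma epsLog_top {ε : ℝ} (hε : 0 < ε) : epsLog ε ⊤ = ⊤ := by
  simp [epsLog, EReal.coe_mul_top_of_pos hε]

lemma epsLog_of_ne {ε : ℝ} {a : ℝ≥0∞} (h0 : a ≠ 0) (ht : a ≠ ⊤) :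
    epsLog ε a = ((ε * Real.log a.toReal : ℝ) : EReal) := by
  simp [epsLog, h0, ht, EReal.coe_mul]

lemma epsLog_mono {ε : ℝ} (hε : 0 < ε) : Monotone (epsLog ε) := by
  intro a b hab
  by_cases ha : a = 0
  · simp [ha, epsLog_zero hε]
  by_cases hbt : b = ⊤
  · simp [hbt, epsLog_top hε]
  have hat : a ≠ ⊤ := fun h => hbt (top_le_iff.mp (h ▸ hab))
  have hb0 : b ≠ 0 := fun h => ha (le_antisymm (h ▸ hab) zero_le)
  rw [epsLog_of_ne ha hat, epsLog_of_ne hb0 hbt]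
  have h1 : Real.log a.toReal ≤ Real.log b.toReal :=
    Real.log_le_log (ENNReal.toReal_pos ha hat)
      ((ENNReal.toReal_le_toReal hat hbt).mpr hab)
  exact_mod_cast mul_le_mul_of_nonneg_left h1 hε.le

lemma epsLog_exp_mul {ε : ℝ} (hε : 0 < ε) (b : ℝ) (m : ℝ≥0∞) (hm : m ≠ ⊤) :
    epsLog ε (ENNReal.ofReal (Real.exp (-b / ε)) * m)
      = ((-b : ℝ) : EReal) + epsLog ε m := by
  have hexp : ENNReal.ofReal (Real.exp (-b / ε)) ≠ 0 := by
    simp [ENNReal.ofReal_eq_zero, not_le, Real.exp_pos]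
  by_cases hm0 : m = 0
  · simp [hm0, epsLog_zero hε]
  · have hprod0 : ENNReal.ofReal (Real.exp (-b / ε)) * m ≠ 0 := mul_ne_zero hexp hm0
    have hprodt : ENNReal.ofReal (Real.exp (-b / ε)) * m ≠ ⊤ :=
      ENNReal.mul_ne_top ENNReal.ofReal_ne_top hm
    rw [epsLog_of_ne hprod0 hprodt, epsLog_of_ne hm0 hm, ENNReal.toReal_mul,
      ENNReal.toReal_ofReal (Real.exp_pos _).le,
      Real.log_mul (Real.exp_pos _).ne' (ENNReal.toReal_ne_zero.mpr ⟨hm0, hm⟩),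
      Real.log_exp]
    have : ε * (-b / ε + Real.log m.toReal) = -b + ε * Real.log m.toReal := by
      field_simp
    rw [this]
    push_cast
    rfl

lemma limsup_epsLog_add {u v : ℝ → ℝ≥0∞} {A : EReal}
    (hu : Filter.limsup (fun ε => epsLog ε (u ε)) Fz ≤ A)
    (hv : Filter.limsup (fun ε => epsLog ε (v ε)) Fz ≤ A) :
    Filter.limsup (fun ε => epsLog ε (u ε + v ε)) Fz ≤ A := by
  refine le_of_forall_gt_imp_ge_of_dense fun z hz => ?_
  obtain ⟨c, hAc, hcz⟩ := EReal.exists_between_coe_real hz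
  obtain ⟨c', hAc', hc'c⟩ := EReal.exists_between_coe_real hAc
  have hc'cR : c' < c := by exact_mod_cast hc'c
  have h1 : ∀ᶠ ε in Fz, epsLog ε (u ε) < (c' : EReal) :=
    eventually_lt_of_limsup_lt (hu.trans_lt hAc')
  have h2 : ∀ᶠ ε in Fz, epsLog ε (v ε) < (c' : EReal) :=
    eventually_lt_of_limsup_lt (hv.trans_lt hAc')
  have htend : Filter.Tendsto (fun ε : ℝ => ε * Real.log 2) Fz (𝓝 0) := by
    have : Filter.Tendsto (fun ε : ℝ => ε * Real.log 2) (𝓝 0) (𝓝 (0 * Real.log 2)) :=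
      tendsto_id.mul_const (Real.log 2)
    simpa using this.mono_left nhdsWithin_le_nhds
  have h3 : ∀ᶠ ε in Fz, ε * Real.log 2 < c - c' :=
    htend.eventually_lt_const (by linarith)
  have h4 : ∀ᶠ ε in Fz, ε ∈ Set.Ioi (0:ℝ) := eventually_mem_nhdsWithin
  refine limsup_le_of_le (by isBoundedDefault) ?_
  filter_upwards [h1, h2, h3, h4] with ε h1 h2 h3 h4
  have hε : (0:ℝ) < ε := h4
  have hut : u ε ≠ ⊤ := by
    intro h; rw [h, epsLog_top hε] at h1; exact absurd h1 not_top_lt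
  have hvt : v ε ≠ ⊤ := by
    intro h; rw [h, epsLog_top hε] at h2; exact absurd h2 not_top_lt
  have hsup_t : u ε ⊔ v ε ≠ ⊤ := by
    exact (sup_lt_iff.mpr ⟨hut.lt_top, hvt.lt_top⟩).ne
  have key : ENNReal.ofReal (Real.exp (-(-(ε * Real.log 2)) / ε)) = 2 := by
    rw [neg_neg, mul_div_cancel_left₀ _ hε.ne', Real.exp_log (by norm_num)]
    norm_num
  calc epsLog ε (u ε + v ε)
      ≤ epsLog ε (2 * (u ε ⊔ v ε)) := by
        refine epsLog_mono hε ?_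
        rw [two_mul]
        exact add_le_add le_sup_left le_sup_right
    _ = ((ε * Real.log 2 : ℝ) : EReal) + epsLog ε (u ε ⊔ v ε) := by
        rw [← key, epsLog_exp_mul hε _ _ hsup_t]; norm_num
    _ = ((ε * Real.log 2 : ℝ) : EReal) + (epsLog ε (u ε) ⊔ epsLog ε (v ε)) := by
        rw [(epsLog_mono hε).map_sup]
    _ ≤ ((c - c' : ℝ) : EReal) + (c' : EReal) := by
        exact add_le_add (by exact_mod_cast h3.le) (sup_le h1.le h2.le)
    _ = (c : EReal) := by norm_cast; ring
    _ ≤ z := hcz.le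

lemma limsup_epsLog_sum {ι : Type*} (s : Finset ι) (g : ι → ℝ → ℝ≥0∞) {A : EReal}
    (h : ∀ i ∈ s, Filter.limsup (fun ε => epsLog ε (g i ε)) Fz ≤ A) :
    Filter.limsup (fun ε => epsLog ε (∑ i ∈ s, g i ε)) Fz ≤ A := by
  classical
  induction s using Finset.induction with
  | empty =>
      refine limsup_le_of_le (by isBoundedDefault) ?_
      filter_upwards [eventually_mem_nhdsWithin] with ε hε
      simp only [Finset.sum_empty]
      rw [epsLog_zero hε]; exact bot_le
  | insert a s hnot ih =>
      simp only [Finset.sum_insert hnot]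
      exact limsup_epsLog_add (h a (Finset.mem_insert_self a s))
        (ih fun i hi => h i (Finset.mem_insert_of_mem hi))

lemma limsup_real_const_add {w : ℝ → EReal} {b r : ℝ}
    (hw : Filter.limsup w Fz ≤ (r : EReal)) :
    Filter.limsup (fun ε => ((b : ℝ) : EReal) + w ε) Fz ≤ ((b + r : ℝ) : EReal) := by
  refine le_of_forall_gt_imp_ge_of_dense fun z hz => ?_
  obtain ⟨c, h1, h2⟩ := EReal.exists_between_coe_real hz
  have h1R : b + r < c := by exact_mod_cast h1
  have hrc : (r : EReal) < ((c - b : ℝ) : EReal) := by exact_mod_cast (by linarith : r < c - b)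
  refine limsup_le_of_le (by isBoundedDefault) ?_
  filter_upwards [eventually_lt_of_limsup_lt (hw.trans_lt hrc)] with ε hε
  calc ((b : ℝ) : EReal) + w ε ≤ ((b : ℝ) : EReal) + ((c - b : ℝ) : EReal) :=
        add_le_add_right hε.le _
    _ = (c : EReal) := by norm_cast; ring
    _ ≤ z := h2.le

lemma expNegDiv'_le_one {v : ℝ≥0∞} {ε : ℝ} (hε : 0 < ε) : expNegDiv' v ε ≤ 1 := by
  unfold expNegDiv'
  split
  · exact zero_le
  · rw [← ENNReal.ofReal_one]
    refine ENNReal.ofReal_le_ofReal ?_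
    rw [← Real.exp_zero]
    refine Real.exp_le_exp.mpr ?_
    exact div_nonpos_of_nonpos_of_nonneg (neg_nonpos_of_nonneg ENNReal.toReal_nonneg) hε.le

lemma expNegDiv'_le {v : ℝ≥0∞} {ε b : ℝ} (hε : 0 < ε)
    (hv : ENNReal.ofReal b ≤ v) (hb : 0 ≤ b) :
    expNegDiv' v ε ≤ ENNReal.ofReal (Real.exp (-b / ε)) := by
  unfold expNegDiv'
  split
  · exact zero_le
  · rename_i hvt
    refine ENNReal.ofReal_le_ofReal (Real.exp_le_exp.mpr ?_)
    have : b ≤ v.toReal := (ENNReal.ofReal_le_iff_le_toReal hvt).mp hv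
    exact (div_le_div_iff_of_pos_right hε).mpr (by linarith)

lemma lint_biUnion_le {α : Type*} {m : MeasurableSpace α} (ν : Measure α)
    {ι : Type*} (t : Finset ι) (s : ι → Set α) (f : α → ℝ≥0∞) :
    ∫⁻ x in ⋃ i ∈ t, s i, f x ∂ν ≤ ∑ i ∈ t, ∫⁻ x in s i, f x ∂ν := by
  classical
  induction t using Finset.induction with
  | empty => simp
  | insert a t hnot ih =>
      rw [Finset.sum_insert hnot]
      refine le_trans ?_ (add_le_add_right ih _)
      rw [Finset.set_biUnion_insert]
      exact lintegral_union_le _ _ _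

end helpers

/-- Varadhan upper bound with `ε`-dependent nonnegative potential: if `(μ_ε)` satisfies
the LDP upper bound with a good rate function `I` on a Polish space, and `V_ε` are
measurable `[0,∞]`-valued potentials with lower envelope `V₋`, then
`limsup_{ε→0} ε log ∫ exp(−V_ε/ε) dμ_ε ≤ − inf_X (I + V₋)`. -/
theorem varadhan_upper_bound_eps_potential
    {X : Type*} [TopologicalSpace X] [PolishSpace X]
    [MeasurableSpace X] [BorelSpace X]
    (μ : ℝ → Measure X) (hprob : ∀ ε > (0:ℝ), IsProbabilityMeasure (μ ε))
    (I : X → ℝ≥0∞)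
    (hIlsc : LowerSemicontinuous I)
    (hIgood : ∀ c : ℝ≥0∞, c ≠ ⊤ → IsCompact {x | I x ≤ c})
    (hLDPupper : ∀ C : Set X, IsClosed C →
      Filter.limsup (fun ε => epsLog ε (μ ε C)) (nhdsWithin 0 (Set.Ioi 0)) ≤
        (-(⨅ x ∈ C, (I x : EReal)) : EReal))
    (V : ℝ → X → ℝ≥0∞) (hVmeas : ∀ ε > (0:ℝ), Measurable (V ε)) :
    Filter.limsup (fun ε => epsLog ε (∫⁻ x, expNegDiv' (V ε x) ε ∂(μ ε)))
        (nhdsWithin 0 (Set.Ioi 0)) ≤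
      (-(⨅ x : X, ((I x : EReal) + (lowerEnv V x : EReal))) : EReal) := by
  letI := TopologicalSpace.upgradeIsCompletelyMetrizable X
  set L : EReal := ⨅ x : X, ((I x : EReal) + (lowerEnv V x : EReal)) with hL
  suffices key : ∀ M : ℝ, (M : EReal) < L →
      Filter.limsup (fun ε => epsLog ε (∫⁻ x, expNegDiv' (V ε x) ε ∂(μ ε)))
        (nhdsWithin 0 (Set.Ioi 0)) ≤ ((-M : ℝ) : EReal) by
    refine le_of_forall_gt_imp_ge_of_dense fun z hz => ?_
    have hz' : -z < L := EReal.neg_lt_comm.mp hz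
    obtain ⟨M, hM1, hM2⟩ := EReal.exists_between_coe_real hz'
    refine (key M hM2).trans ?_
    have h1 : -(M : EReal) < z := EReal.neg_lt_of_neg_lt hM1
    rw [EReal.coe_neg]
    exact h1.le
  intro M hM
  have hpt : ∀ x : X, ∃ (U : Set X) (a b δ : ℝ), IsOpen U ∧ x ∈ U ∧ 0 ≤ a ∧ 0 ≤ b ∧
      M ≤ a + b ∧ 0 < δ ∧ (∀ y ∈ closure U, ENNReal.ofReal a ≤ I y) ∧
      (∀ ε : ℝ, 0 < ε → ε < δ → ∀ y ∈ closure U, ENNReal.ofReal b ≤ V ε y) := by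
    intro x
    have hMx : (M : EReal) < (I x : EReal) + (lowerEnv V x : EReal) :=
      hM.trans_le (hL ▸ iInf_le _ x)
    rcases le_or_gt M 0 with hM0 | hM0
    · exact ⟨univ, 0, 0, 1, isOpen_univ, mem_univ x, le_refl _, le_refl _, by linarith,
        one_pos, fun y _ => by simp, fun ε _ _ y _ => by simp⟩
    have hMS : ENNReal.ofReal M < I x + lowerEnv V x := by
      rw [← EReal.coe_ennreal_lt_coe_ennreal_iff, EReal.coe_ennreal_add]
      refine lt_of_le_of_lt ?_ hMx
      rw [EReal.coe_ennreal_ofReal]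
      exact_mod_cast max_le (le_refl M) hM0.le
    have hab : ∃ a b : ℝ, 0 ≤ a ∧ 0 ≤ b ∧ M ≤ a + b ∧
        (a = 0 ∨ ENNReal.ofReal a < I x) ∧ (b = 0 ∨ ENNReal.ofReal b < lowerEnv V x) := by
      by_cases hu0 : I x = 0
      · refine ⟨0, M, le_refl _, hM0.le, by linarith, Or.inl rfl, Or.inr ?_⟩
        have h := hMS; rwa [hu0, zero_add] at h
      by_cases hv0 : lowerEnv V x = 0
      · refine ⟨M, 0, hM0.le, le_refl _, by linarith, Or.inr ?_, Or.inl rfl⟩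
        have h := hMS; rwa [hv0, add_zero] at h
      by_cases hut : I x = ⊤
      · exact ⟨M, 0, hM0.le, le_refl _, by linarith,
          Or.inr (by rw [hut]; exact ENNReal.ofReal_lt_top), Or.inl rfl⟩
      by_cases hvt : lowerEnv V x = ⊤
      · exact ⟨0, M, le_refl _, hM0.le, by linarith, Or.inl rfl,
          Or.inr (by rw [hvt]; exact ENNReal.ofReal_lt_top)⟩
      · have hur : 0 < (I x).toReal := ENNReal.toReal_pos hu0 hut
        have hvr : 0 < (lowerEnv V x).toReal := ENNReal.toReal_pos hv0 hvt
        have hsum : M < (I x).toReal + (lowerEnv V x).toReal := by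
          have h2 : I x + lowerEnv V x ≠ ⊤ := ENNReal.add_ne_top.mpr ⟨hut, hvt⟩
          have h3 := (ENNReal.ofReal_lt_iff_lt_toReal hM0.le h2).mp hMS
          rwa [ENNReal.toReal_add hut hvt] at h3
        set ur := (I x).toReal with hur'
        set vr := (lowerEnv V x).toReal with hvr'
        set θ := min ((ur + vr - M)/2) (min (ur/2) (vr/2)) with hθ
        have hθ1 : θ ≤ (ur + vr - M)/2 := min_le_left _ _
        have hθ2 : θ ≤ ur/2 := (min_le_right _ _).trans (min_le_left _ _)
        have hθ3 : θ ≤ vr/2 := (min_le_right _ _).trans (min_le_right _ _)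
        have hθpos : 0 < θ := lt_min (by linarith) (lt_min (by linarith) (by linarith))
        refine ⟨ur - θ, vr - θ, by linarith, by linarith, by linarith, Or.inr ?_, Or.inr ?_⟩
        · rw [← ENNReal.ofReal_toReal hut]
          exact (ENNReal.ofReal_lt_ofReal_iff hur).mpr (by linarith)
        · rw [← ENNReal.ofReal_toReal hvt]
          exact (ENNReal.ofReal_lt_ofReal_iff hvr).mpr (by linarith)
    obtain ⟨a, b, ha, hb, habM, haI, hbV⟩ := hab
    have hT : ∃ T ∈ 𝓝 x, ∀ y ∈ T, ENNReal.ofReal a ≤ I y := by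
      rcases haI with h | h
      · exact ⟨univ, univ_mem, fun y _ => by simp [h]⟩
      · exact ⟨{y | ENNReal.ofReal a < I y}, eventually_iff.mp (hIlsc x _ h),
          fun y hy => hy.le⟩
    have hW : ∃ δ : ℝ, 0 < δ ∧ ∃ W ∈ 𝓝 x, ∀ ε : ℝ, 0 < ε → ε < δ →
        ∀ y ∈ W, ENNReal.ofReal b ≤ V ε y := by
      rcases hbV with h | h
      · exact ⟨1, one_pos, univ, univ_mem, fun ε _ _ y _ => by simp [h]⟩
      · have hev : ∀ᶠ p : ℝ × X in (nhdsWithin 0 (Set.Ioi 0)) ×ˢ 𝓝 x,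
            ENNReal.ofReal b < V p.1 p.2 := eventually_lt_of_lt_liminf h
        rw [eventually_prod_iff] at hev
        obtain ⟨pa, hpa, pb, hpb, hpab⟩ := hev
        obtain ⟨δ', hδ', hsub⟩ := mem_nhdsGT_iff_exists_Ioo_subset.mp
          (eventually_iff.mp hpa)
        refine ⟨δ', hδ', {y | pb y}, eventually_iff.mp hpb, fun ε hε1 hε2 y hy => ?_⟩
        exact (hpab (hsub ⟨hε1, hε2⟩) hy).le
    obtain ⟨T, hTmem, hTI⟩ := hT
    obtain ⟨δ, hδpos, W, hWmem, hWV⟩ := hW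
    obtain ⟨D, hD, hDsub⟩ := (closed_nhds_basis x).mem_iff.mp (inter_mem hTmem hWmem)
    obtain ⟨hDmem, hDclosed⟩ := hD
    refine ⟨interior D, a, b, δ, isOpen_interior, mem_interior_iff_mem_nhds.mpr hDmem,
      ha, hb, habM, hδpos, ?_, ?_⟩
    · intro y hy
      exact hTI y (hDsub ((closure_minimal interior_subset hDclosed) hy)).1
    · intro ε hε1 hε2 y hy
      exact hWV ε hε1 hε2 y (hDsub ((closure_minimal interior_subset hDclosed) hy)).2
  choose U a b δ hopen hmem ha hb habM hδ hIb hVb using hpt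
  have hK : IsCompact {x | I x ≤ ENNReal.ofReal M} := hIgood _ ENNReal.ofReal_ne_top
  obtain ⟨t, htK, htcov⟩ := hK.elim_nhds_subcover U (fun x _ => (hopen x).mem_nhds (hmem x))
  set C0 : Set X := (⋃ x ∈ t, U x)ᶜ with hC0
  have hC0closed : IsClosed C0 := (isOpen_biUnion fun x _ => hopen x).isClosed_compl
  have hC0I : ∀ y ∈ C0, ENNReal.ofReal M ≤ I y := by
    intro y hy
    by_contra hcon
    push_neg at hcon
    exact hy (htcov hcon.le)
  have hgc : Filter.limsup (fun ε => epsLog ε (μ ε C0)) (nhdsWithin 0 (Set.Ioi 0))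
      ≤ ((-M : ℝ) : EReal) := by
    refine (hLDPupper C0 hC0closed).trans ?_
    rw [EReal.coe_neg, EReal.neg_le_neg_iff]
    refine le_iInf₂ fun y hy => ?_
    refine le_trans ?_ ((EReal.coe_ennreal_le_coe_ennreal_iff).mpr (hC0I y hy))
    rw [EReal.coe_ennreal_ofReal]
    exact_mod_cast le_max_left M 0
  set g : X → ℝ → ℝ≥0∞ :=
    fun x ε => ENNReal.ofReal (Real.exp (-(b x) / ε)) * μ ε (closure (U x)) with hg
  have hgx : ∀ x ∈ t, Filter.limsup (fun ε => epsLog ε (g x ε)) (nhdsWithin 0 (Set.Ioi 0))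
      ≤ ((-M : ℝ) : EReal) := by
    intro x hx
    have hw : Filter.limsup (fun ε => epsLog ε (μ ε (closure (U x))))
        (nhdsWithin 0 (Set.Ioi 0)) ≤ ((-(a x) : ℝ) : EReal) := by
      refine (hLDPupper _ isClosed_closure).trans ?_
      rw [EReal.coe_neg, EReal.neg_le_neg_iff]
      refine le_iInf₂ fun y hy => ?_
      refine le_trans ?_ ((EReal.coe_ennreal_le_coe_ennreal_iff).mpr (hIb x y hy))
      rw [EReal.coe_ennreal_ofReal]
      exact_mod_cast le_max_left (a x) 0
    have heq : ∀ᶠ ε in (nhdsWithin (0:ℝ) (Set.Ioi 0)),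
        epsLog ε (g x ε) = ((-(b x) : ℝ) : EReal) + epsLog ε (μ ε (closure (U x))) := by
      filter_upwards [eventually_mem_nhdsWithin] with ε hε
      haveI := hprob ε hε
      exact epsLog_exp_mul hε (b x) _ (measure_ne_top _ _)
    rw [limsup_congr heq]
    refine (limsup_real_const_add hw).trans ?_
    exact_mod_cast (by linarith [habM x] : -(b x) + -(a x) ≤ -M)
  have hdom : ∀ᶠ ε in (nhdsWithin (0:ℝ) (Set.Ioi 0)),
      (∫⁻ y, expNegDiv' (V ε y) ε ∂(μ ε)) ≤ μ ε C0 + ∑ x ∈ t, g x ε := by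
    have hδall : ∀ᶠ ε in (nhdsWithin (0:ℝ) (Set.Ioi 0)), ∀ x ∈ t, ε < δ x := by
      rw [eventually_all_finset]
      intro x hx
      have hIoo : Set.Ioo (0:ℝ) (δ x) ∈ nhdsWithin (0:ℝ) (Set.Ioi 0) :=
        Ioo_mem_nhdsGT_of_mem ⟨le_refl 0, hδ x⟩
      filter_upwards [hIoo] with ε hε using hε.2
    filter_upwards [eventually_mem_nhdsWithin, hδall] with ε hε hδε
    have hεpos : (0:ℝ) < ε := hε
    calc (∫⁻ y, expNegDiv' (V ε y) ε ∂(μ ε))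
        = ∫⁻ y in univ, expNegDiv' (V ε y) ε ∂(μ ε) := (setLIntegral_univ _).symm
      _ ≤ ∫⁻ y in C0 ∪ ⋃ x ∈ t, closure (U x), expNegDiv' (V ε y) ε ∂(μ ε) := by
          refine lintegral_mono_set fun y _ => ?_
          by_cases hy : y ∈ ⋃ x ∈ t, U x
          · obtain ⟨x, hx, hyx⟩ := mem_iUnion₂.mp hy
            exact Set.mem_union_right _ (mem_iUnion₂.mpr ⟨x, hx, subset_closure hyx⟩)
          · exact Set.mem_union_left _ hy
      _ ≤ (∫⁻ y in C0, expNegDiv' (V ε y) ε ∂(μ ε))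
          + ∫⁻ y in ⋃ x ∈ t, closure (U x), expNegDiv' (V ε y) ε ∂(μ ε) :=
          lintegral_union_le _ _ _
      _ ≤ μ ε C0 + ∑ x ∈ t, g x ε := by
          refine add_le_add ?_ ?_
          · calc (∫⁻ y in C0, expNegDiv' (V ε y) ε ∂(μ ε))
                ≤ ∫⁻ _ in C0, 1 ∂(μ ε) := lintegral_mono fun y => expNegDiv'_le_one hεpos
              _ = μ ε C0 := setLIntegral_one _
          · refine (lint_biUnion_le (μ ε) t (fun x => closure (U x)) _).trans ?_
            refine Finset.sum_le_sum fun x hx => ?_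
            have hbound : ∀ᵐ y ∂((μ ε).restrict (closure (U x))),
                expNegDiv' (V ε y) ε ≤ ENNReal.ofReal (Real.exp (-(b x) / ε)) := by
              refine (ae_restrict_iff' measurableSet_closure).mpr (ae_of_all _ fun y hy => ?_)
              exact expNegDiv'_le hεpos (hVb x ε hεpos (hδε x hx) y hy) (hb x)
            calc (∫⁻ y in closure (U x), expNegDiv' (V ε y) ε ∂(μ ε))
                ≤ ∫⁻ _ in closure (U x), ENNReal.ofReal (Real.exp (-(b x) / ε)) ∂(μ ε) :=
                  lintegral_mono_ae hbound
              _ = g x ε := setLIntegral_const _ _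
  have hmono : (fun ε => epsLog ε (∫⁻ y, expNegDiv' (V ε y) ε ∂(μ ε)))
      ≤ᶠ[nhdsWithin (0:ℝ) (Set.Ioi 0)]
      (fun ε => epsLog ε (μ ε C0 + ∑ x ∈ t, g x ε)) := by
    filter_upwards [hdom, eventually_mem_nhdsWithin] with ε h1 h2
    exact epsLog_mono h2 h1
  refine (limsup_le_limsup hmono).trans ?_
  exact limsup_epsLog_add hgc (limsup_epsLog_sum t g hgx)
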